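/- Let (f_{2n})_{n≥1} be real numbers such that the even power series f(x) = 1 + Σ_{n≥1} f_{2n} x^{2n}/(2n)! has positive radius of convergence, and let Γ = (γ_{i,j})_{i,j≥0} be an infinite matrix of real numbers satisfying: γ_{i,j} = 2γ_{i−1,j−1} + (1/2)(γ_{i−1,j+1} + γ_{i+1,j−1}) for all i ≥ 1, j ≥ 1; γ_{i,j} = 0 whenever i + j is odd; γ_{0,0} = 1; γ_{2n+1,0} = γ_{0,2n+1} = 0 for n ≥ 0; and γ_{2n,0} = γ_{0,2n} = f_{2n} for n ≥ 1. Then, as formal power series in two variables, Σ_{i≥0, j≥0} γ_{i,j} x^i y^j/(i! j!) = f(x+y) · sec(x+y) · cos(x−y), where sec denotes the formal power series inverse of the cosine series. -/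

import Mathlib

open scoped BigOperators

/-- `σ` is an alternating (down-up) permutation of `{1,…,n}` (written 0-indexed):
`σ(1) > σ(2) < σ(3) > σ(4) < ⋯` in the 1-indexed notation of the paper. -/
def IsAlternating {n : ℕ} (σ : Equiv.Perm (Fin n)) : Prop :=
  ∀ i : ℕ, ∀ h : i + 1 < n,
    if i % 2 = 0 then (σ ⟨i + 1, h⟩ : ℕ) < (σ ⟨i, by omega⟩ : ℕ)
    else (σ ⟨i, by omega⟩ : ℕ) < (σ ⟨i + 1, h⟩ : ℕ)

/-- The value (in `{1,…,n}`) of the permutation `σ` at the 1-based position `j`,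
with the convention that positions outside `{1,…,n}` carry the value `0`. -/
def posVal {n : ℕ} (σ : Equiv.Perm (Fin n)) (j : ℕ) : ℕ :=
  if h : 1 ≤ j ∧ j ≤ n then (σ ⟨j - 1, by omega⟩ : ℕ) + 1 else 0

/-- `grn σ`: the greater neighbor of the maximum value `n` in `σ`. -/
def grn : {n : ℕ} → Equiv.Perm (Fin n) → ℕ
  | 0, _ => 0
  | (m + 1), σ =>
      max (posVal σ (((σ.symm (Fin.last m) : ℕ) + 1) - 1))
          (posVal σ (((σ.symm (Fin.last m) : ℕ) + 1) + 1))

/-- The set `𝔄_n` of alternating permutations of length `n`. -/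
def altA (n : ℕ) : Set (Equiv.Perm (Fin n)) := {σ | IsAlternating σ}

/-- The set `𝔄_{n,k} = {σ ∈ 𝔄_n : grn σ = k}`. -/
def altAk (n k : ℕ) : Set (Equiv.Perm (Fin n)) := {σ | IsAlternating σ ∧ grn σ = k}

/-- The tangent numbers, defined by `tan u = Σ_{n≥0} T_{2n+1} u^{2n+1}/(2n+1)!`;
`tangentNumber m` is the `m`-th Taylor coefficient of `tan` at `0`, times `m!`. -/
noncomputable def tangentNumber (m : ℕ) : ℝ := iteratedDeriv m Real.tan 0

/-- The secant numbers, defined by `sec u = 1/cos u = Σ_{n≥0} E_{2n} u^{2n}/(2n)!`;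
`secantNumber m` is the `m`-th Taylor coefficient of `sec` at `0`, times `m!`. -/
noncomputable def secantNumber (m : ℕ) : ℝ := iteratedDeriv m (fun u => 1 / Real.cos u) 0

/-- The finite difference system (1.2):
`f_n(k+2) − 2 f_n(k+1) + f_n(k) + 4 f_{n−1}(k) = 0` for `n ≥ 2`, `1 ≤ k ≤ 2n−3`. -/
def SatisfiesFD (f : ℕ → ℕ → ℚ) : Prop :=
  ∀ n, 2 ≤ n → ∀ k, 1 ≤ k → k ≤ 2 * n - 3 →
    f n (k + 2) - 2 * f n (k + 1) + f n k + 4 * f (n - 1) k = 0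

/-- Initial conditions [tan1]. -/
def Tan1 (f : ℕ → ℕ → ℚ) : Prop :=
  f 1 1 = 1 ∧ ∀ n, 2 ≤ n →
    f n 1 = 0 ∧ f n 2 = 2 * ∑ k ∈ Finset.Icc 1 (2 * n - 3), f (n - 1) k

/-- Initial conditions [sec1]. -/
def Sec1 (f : ℕ → ℕ → ℚ) : Prop :=
  f 1 1 = 1 ∧ ∀ n, 2 ≤ n →
    f n 1 = ∑ k ∈ Finset.Icc 1 (2 * n - 3), f (n - 1) k ∧
    f n 2 = 3 * ∑ k ∈ Finset.Icc 1 (2 * n - 3), f (n - 1) k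

/-- The formal power series of `cos`. -/
noncomputable def cosPS : PowerSeries ℝ :=
  PowerSeries.mk fun m => if Even m then (-1 : ℝ) ^ (m / 2) / Nat.factorial m else 0

/-- The even formal power series `f(x) = 1 + Σ_{n≥1} f_{2n} x^{2n}/(2n)!` attached to
the sequence `n ↦ f n` (where `f n` stands for `f_{2n}`). -/
noncomputable def evenPS (f : ℕ → ℝ) : PowerSeries ℝ :=
  PowerSeries.mk fun m =>
    if m = 0 then 1 else if m % 2 = 0 then f (m / 2) / Nat.factorial m else 0

/-- The two-variable formal power series `g(x + ε·y)` obtained by substituting `x + ε·y`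
into the one-variable series `g`: by the binomial theorem its coefficient of `x^i y^j`
is `g_{i+j} · C(i+j, i) · ε^j`. -/
noncomputable def substXY (g : PowerSeries ℝ) (ε : ℝ) : MvPowerSeries (Fin 2) ℝ :=
  fun d => (PowerSeries.coeff (d 0 + d 1) g) * (Nat.choose (d 0 + d 1) (d 0)) * ε ^ (d 1)

noncomputable def FTn (f : ℕ → ℝ) (m : ℕ) : ℝ := m.factorial * PowerSeries.coeff m (evenPS f)
noncomputable def GTn (m : ℕ) : ℝ := m.factorial * PowerSeries.coeff m (cosPS⁻¹)
noncomputable def cosTn (m : ℕ) : ℝ := m.factorial * PowerSeries.coeff m cosPS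

lemma coeff_cosPS (m : ℕ) : PowerSeries.coeff m cosPS
    = if Even m then (-1 : ℝ) ^ (m / 2) / Nat.factorial m else 0 := PowerSeries.coeff_mk _ _

lemma cosTn_eq (m : ℕ) : cosTn m = if m % 2 = 0 then (-1 : ℝ) ^ (m / 2) else 0 := by
  by_cases h : m % 2 = 0 <;>
    simp [cosTn, coeff_cosPS, Nat.even_iff, h]
  field_simp

lemma constCoeff_cosPS : PowerSeries.constantCoeff cosPS = 1 := by
  rw [← PowerSeries.coeff_zero_eq_constantCoeff_apply, coeff_cosPS]; norm_num

lemma coeff_cos_odd {m : ℕ} (h : ¬ m % 2 = 0) : PowerSeries.coeff m cosPS = 0 := by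
  simp [coeff_cosPS, Nat.even_iff, h]

lemma coeff_sec_odd : ∀ m : ℕ, ¬ m % 2 = 0 → PowerSeries.coeff m cosPS⁻¹ = 0 := by
  intro m
  induction m using Nat.strong_induction_on with
  | _ m IH =>
    intro hm
    rw [PowerSeries.coeff_inv, if_neg (by omega)]
    rw [constCoeff_cosPS]
    rw [show (∑ x ∈ Finset.HasAntidiagonal.antidiagonal m,
        if x.2 < m then (PowerSeries.coeff x.1) cosPS * (PowerSeries.coeff x.2) cosPS⁻¹ else 0) = 0
      from Finset.sum_eq_zero fun x hx => ?_, mul_zero]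
    rw [Finset.HasAntidiagonal.mem_antidiagonal] at hx
    by_cases h2 : x.2 < m
    · rw [if_pos h2]
      by_cases h2o : x.2 % 2 = 0
      · rw [coeff_cos_odd (by omega), zero_mul]
      · rw [IH x.2 h2 h2o, mul_zero]
    · rw [if_neg h2]

lemma GTn_odd {m : ℕ} (h : ¬ m % 2 = 0) : GTn m = 0 := by rw [GTn, coeff_sec_odd m h, mul_zero]

lemma FTn_odd (f : ℕ → ℝ) {m : ℕ} (h : ¬ m % 2 = 0) : FTn f m = 0 := by
  rw [FTn, evenPS, PowerSeries.coeff_mk, if_neg (by omega), if_neg h, mul_zero]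

lemma GTn_zero : GTn 0 = 1 := by
  rw [GTn, PowerSeries.coeff_zero_eq_constantCoeff_apply, PowerSeries.constantCoeff_inv,
    constCoeff_cosPS]
  norm_num

lemma FTn_zero (f : ℕ → ℝ) : FTn f 0 = 1 := by
  rw [FTn, evenPS, PowerSeries.coeff_mk, if_pos rfl]; norm_num

lemma coeff_evenPS_two_mul (f : ℕ → ℝ) (n : ℕ) (hn : 1 ≤ n) :
    PowerSeries.coeff (2 * n) (evenPS f) = f n / Nat.factorial (2 * n) := by
  rw [evenPS, PowerSeries.coeff_mk, if_neg (by omega), if_pos (by omega)]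
  rw [show 2 * n / 2 = n by omega]

lemma factCoeffMul (g h : PowerSeries ℝ) (i : ℕ) :
    (i.factorial : ℝ) * PowerSeries.coeff i (g * h) =
      ∑ a ∈ Finset.range (i + 1), (Nat.choose i a : ℝ) *
        ((a.factorial : ℝ) * PowerSeries.coeff a g) *
        (((i - a).factorial : ℝ) * PowerSeries.coeff (i - a) h) := by
  rw [PowerSeries.coeff_mul, Finset.Nat.sum_antidiagonal_eq_sum_range_succ_mk, Finset.mul_sum]
  refine Finset.sum_congr rfl fun a ha => ?_
  rw [Finset.mem_range] at ha
  have := Nat.choose_mul_factorial_mul_factorial (Nat.lt_succ_iff.mp ha)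
  have hcast : (i.factorial : ℝ) = (Nat.choose i a : ℝ) * a.factorial * (i - a).factorial := by
    rw [← this]; push_cast; ring
  rw [hcast]; ring

lemma convG_succ {R : Type*} [CommRing R] (W : ℕ → ℕ → R) (i : ℕ) :
    ∑ a ∈ Finset.range (i + 2), (Nat.choose (i + 1) a : R) * W a (i + 1 - a) =
    (∑ a ∈ Finset.range (i + 1), (Nat.choose i a : R) * W (a + 1) (i - a)) +
    ∑ a ∈ Finset.range (i + 1), (Nat.choose i a : R) * W a (i - a + 1) := by
  rw [show i + 2 = (i + 1) + 1 from rfl, Finset.sum_range_succ'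
    (fun a => (Nat.choose (i + 1) a : R) * W a (i + 1 - a)) (i + 1)]
  have h1 : ∀ a ∈ Finset.range (i+1), (Nat.choose (i+1) (a+1) : R) * W (a+1) (i+1-(a+1)) =
      (Nat.choose i a : R) * W (a+1) (i-a) + (Nat.choose i (a+1) : R) * W (a+1) (i-a) := by
    intro a _
    rw [Nat.succ_sub_succ, Nat.choose_succ_succ]
    push_cast; ring
  rw [Finset.sum_congr rfl h1, Finset.sum_add_distrib]
  rw [Finset.sum_range_succ' (fun a => (Nat.choose i a : R) * W a (i - a + 1)) i]
  rw [Finset.sum_range_succ (fun a => (Nat.choose i (a+1) : R) * W (a+1) (i-a)) i]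
  have h2 : ∀ a ∈ Finset.range i, (Nat.choose i (a+1) : R) * W (a+1) (i-(a+1)+1) =
      (Nat.choose i (a+1) : R) * W (a+1) (i-a) := by
    intro a ha
    rw [Finset.mem_range] at ha
    rw [show i-(a+1)+1 = i-a by omega]
  rw [Finset.sum_congr rfl h2]
  simp [Nat.choose_succ_self]
  ring

noncomputable def HTn (f : ℕ → ℝ) (k₁ k₂ a b : ℕ) : ℝ :=
  ∑ a' ∈ Finset.range (a + 1), ∑ b' ∈ Finset.range (b + 1),
    (Nat.choose a a' : ℝ) * (Nat.choose b b' : ℝ) * FTn f (a' + b' + k₁) *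
      GTn ((a - a') + (b - b') + k₂)

lemma HTn_succ_left (f : ℕ → ℝ) (k₁ k₂ a b : ℕ) :
    HTn f k₁ k₂ (a + 1) b = HTn f (k₁ + 1) k₂ a b + HTn f k₁ (k₂ + 1) a b := by
  have key := convG_succ (R := ℝ) (fun x p => ∑ b' ∈ Finset.range (b + 1),
    (Nat.choose b b' : ℝ) * FTn f (x + b' + k₁) * GTn (p + (b - b') + k₂)) a
  have l : HTn f k₁ k₂ (a + 1) b = ∑ x ∈ Finset.range (a + 2),
      (Nat.choose (a+1) x : ℝ) * ∑ b' ∈ Finset.range (b + 1),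
        (Nat.choose b b' : ℝ) * FTn f (x + b' + k₁) * GTn ((a + 1 - x) + (b - b') + k₂) := by
    refine Finset.sum_congr rfl fun x _ => ?_
    rw [Finset.mul_sum]
    exact Finset.sum_congr rfl fun b' _ => by ring
  rw [l]
  rw [key]
  congr 1
  · rw [HTn]
    refine Finset.sum_congr rfl fun x _ => ?_
    rw [Finset.mul_sum]
    refine Finset.sum_congr rfl fun b' _ => ?_
    rw [show x + 1 + b' + k₁ = x + b' + (k₁ + 1) by ring]
    ring
  · rw [HTn]
    refine Finset.sum_congr rfl fun x _ => ?_
    rw [Finset.mul_sum]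
    refine Finset.sum_congr rfl fun b' _ => ?_
    rw [show (a - x) + (b - b') + (k₂ + 1) = (a - x + 1) + (b - b') + k₂ by ring]
    ring

lemma HTn_succ_right (f : ℕ → ℝ) (k₁ k₂ a b : ℕ) :
    HTn f k₁ k₂ a (b + 1) = HTn f (k₁ + 1) k₂ a b + HTn f k₁ (k₂ + 1) a b := by
  have key := convG_succ (R := ℝ) (fun x p => ∑ a' ∈ Finset.range (a + 1),
    (Nat.choose a a' : ℝ) * FTn f (a' + x + k₁) * GTn ((a - a') + p + k₂)) b
  have l : HTn f k₁ k₂ a (b + 1) = ∑ x ∈ Finset.range (b + 2),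
      (Nat.choose (b+1) x : ℝ) * ∑ a' ∈ Finset.range (a + 1),
        (Nat.choose a a' : ℝ) * FTn f (a' + x + k₁) * GTn ((a - a') + (b + 1 - x) + k₂) := by
    rw [HTn, Finset.sum_comm]
    refine Finset.sum_congr rfl fun x _ => ?_
    rw [Finset.mul_sum]
    exact Finset.sum_congr rfl fun a' _ => by ring
  rw [l]
  rw [key]
  congr 1
  · rw [HTn, Finset.sum_comm]
    refine Finset.sum_congr rfl fun x _ => ?_
    rw [Finset.mul_sum]
    refine Finset.sum_congr rfl fun a' _ => ?_
    rw [show a' + (x + 1) + k₁ = a' + x + (k₁ + 1) by ring]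
    ring
  · rw [HTn, Finset.sum_comm]
    refine Finset.sum_congr rfl fun x _ => ?_
    rw [Finset.mul_sum]
    refine Finset.sum_congr rfl fun a' _ => ?_
    rw [show (a - a') + (b - x) + (k₂ + 1) = (a - a') + ((b - x) + 1) + k₂ by ring]
    ring

lemma I_pow_re_im (m : ℕ) : (Complex.I ^ m).re = (if m % 2 = 0 then (-1 : ℝ) ^ (m / 2) else 0) ∧
    (Complex.I ^ m).im = (if m % 2 = 1 then (-1 : ℝ) ^ (m / 2) else 0) := by
  induction m with
  | zero => simp
  | succ m ih =>
    rw [pow_succ, Complex.mul_I_re, Complex.mul_I_im, ih.1, ih.2]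
    rcases Nat.even_or_odd m with h | h
    · have h0 : m % 2 = 0 := Nat.even_iff.mp h
      have h1 : (m+1) % 2 = 1 := by omega
      have hd : (m+1)/2 = m/2 := by omega
      simp [h0, h1, hd]
    · have h0 : m % 2 = 1 := Nat.odd_iff.mp h
      have h1 : (m+1) % 2 = 0 := by omega
      have hd : (m+1)/2 = m/2 + 1 := by omega
      simp [h0, h1, hd, pow_succ]

lemma epsC_re (p q : ℕ) :
    (Complex.I ^ p * (-Complex.I) ^ q).re = cosTn (p + q) * (-1 : ℝ) ^ q := by
  have h : Complex.I ^ p * (-Complex.I) ^ q = (((-1 : ℝ) ^ q : ℝ) : ℂ) * Complex.I ^ (p + q) := by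
    rw [neg_pow, pow_add]; push_cast; ring
  rw [h, Complex.re_ofReal_mul, (I_pow_re_im (p+q)).1, cosTn_eq]
  by_cases h2 : (p + q) % 2 = 0 <;> simp [h2] <;> ring

noncomputable def SSc (f : ℕ → ℝ) (k₁ k₂ i j : ℕ) : ℂ :=
  ∑ a ∈ Finset.range (i + 1), ∑ b ∈ Finset.range (j + 1),
    ((Nat.choose i a * Nat.choose j b * HTn f k₁ k₂ a b : ℝ) : ℂ) *
      (Complex.I ^ (i - a) * (-Complex.I) ^ (j - b))

lemma SSc_succ_left (f : ℕ → ℝ) (k₁ k₂ i j : ℕ) :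
    SSc f k₁ k₂ (i + 1) j = Complex.I * SSc f k₁ k₂ i j
      + SSc f (k₁ + 1) k₂ i j + SSc f k₁ (k₂ + 1) i j := by
  have key := convG_succ (R := ℂ) (fun a p => ∑ b ∈ Finset.range (j + 1),
    ((Nat.choose j b * HTn f k₁ k₂ a b : ℝ) : ℂ) * (Complex.I ^ p * (-Complex.I) ^ (j - b))) i
  have l : SSc f k₁ k₂ (i + 1) j = ∑ a ∈ Finset.range (i + 2), (Nat.choose (i+1) a : ℂ) *
      ∑ b ∈ Finset.range (j + 1), ((Nat.choose j b * HTn f k₁ k₂ a b : ℝ) : ℂ) *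
        (Complex.I ^ (i + 1 - a) * (-Complex.I) ^ (j - b)) := by
    rw [SSc]
    refine Finset.sum_congr rfl fun a _ => ?_
    rw [Finset.mul_sum]
    refine Finset.sum_congr rfl fun b _ => ?_
    push_cast; ring
  rw [l, key]
  have e1 : (∑ a ∈ Finset.range (i + 1), (Nat.choose i a : ℂ) *
      ∑ b ∈ Finset.range (j + 1), ((Nat.choose j b * HTn f k₁ k₂ (a + 1) b : ℝ) : ℂ) *
        (Complex.I ^ (i - a) * (-Complex.I) ^ (j - b)))
      = SSc f (k₁ + 1) k₂ i j + SSc f k₁ (k₂ + 1) i j := by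
    simp only [SSc, ← Finset.sum_add_distrib]
    refine Finset.sum_congr rfl fun a _ => ?_
    rw [Finset.mul_sum]
    refine Finset.sum_congr rfl fun b _ => ?_
    rw [HTn_succ_left]
    push_cast; ring
  have e2 : (∑ a ∈ Finset.range (i + 1), (Nat.choose i a : ℂ) *
      ∑ b ∈ Finset.range (j + 1), ((Nat.choose j b * HTn f k₁ k₂ a b : ℝ) : ℂ) *
        (Complex.I ^ (i - a + 1) * (-Complex.I) ^ (j - b)))
      = Complex.I * SSc f k₁ k₂ i j := by
    simp only [SSc, Finset.mul_sum]
    refine Finset.sum_congr rfl fun a _ => ?_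
    refine Finset.sum_congr rfl fun b _ => ?_
    rw [pow_succ]
    push_cast; ring
  rw [e1, e2]
  ring

lemma SSc_succ_right (f : ℕ → ℝ) (k₁ k₂ i j : ℕ) :
    SSc f k₁ k₂ i (j + 1) = (-Complex.I) * SSc f k₁ k₂ i j
      + SSc f (k₁ + 1) k₂ i j + SSc f k₁ (k₂ + 1) i j := by
  have key := convG_succ (R := ℂ) (fun b p => ∑ a ∈ Finset.range (i + 1),
    ((Nat.choose i a * HTn f k₁ k₂ a b : ℝ) : ℂ) * (Complex.I ^ (i - a) * (-Complex.I) ^ p)) j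
  have l : SSc f k₁ k₂ i (j + 1) = ∑ b ∈ Finset.range (j + 2), (Nat.choose (j+1) b : ℂ) *
      ∑ a ∈ Finset.range (i + 1), ((Nat.choose i a * HTn f k₁ k₂ a b : ℝ) : ℂ) *
        (Complex.I ^ (i - a) * (-Complex.I) ^ (j + 1 - b)) := by
    rw [SSc, Finset.sum_comm]
    refine Finset.sum_congr rfl fun b _ => ?_
    rw [Finset.mul_sum]
    refine Finset.sum_congr rfl fun a _ => ?_
    push_cast; ring
  rw [l, key]
  have e1 : (∑ b ∈ Finset.range (j + 1), (Nat.choose j b : ℂ) *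
      ∑ a ∈ Finset.range (i + 1), ((Nat.choose i a * HTn f k₁ k₂ a (b + 1) : ℝ) : ℂ) *
        (Complex.I ^ (i - a) * (-Complex.I) ^ (j - b)))
      = SSc f (k₁ + 1) k₂ i j + SSc f k₁ (k₂ + 1) i j := by
    simp only [SSc, ← Finset.sum_add_distrib]
    rw [Finset.sum_comm]
    refine Finset.sum_congr rfl fun b _ => ?_
    rw [Finset.mul_sum]
    refine Finset.sum_congr rfl fun a _ => ?_
    rw [HTn_succ_right]
    push_cast; ring
  have e2 : (∑ b ∈ Finset.range (j + 1), (Nat.choose j b : ℂ) *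
      ∑ a ∈ Finset.range (i + 1), ((Nat.choose i a * HTn f k₁ k₂ a b : ℝ) : ℂ) *
        (Complex.I ^ (i - a) * (-Complex.I) ^ (j - b + 1)))
      = (-Complex.I) * SSc f k₁ k₂ i j := by
    simp only [SSc, Finset.mul_sum]
    rw [Finset.sum_comm]
    refine Finset.sum_congr rfl fun b _ => ?_
    refine Finset.sum_congr rfl fun a _ => ?_
    rw [pow_succ]
    push_cast; ring
  rw [e1, e2]
  ring

lemma SSc_rec (f : ℕ → ℝ) (i j : ℕ) :
    SSc f 0 0 (i + 1) (j + 1) = ((2 : ℝ) : ℂ) * SSc f 0 0 i j +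
      (((1 : ℝ)/2 : ℝ) : ℂ) * (SSc f 0 0 i (j + 2) + SSc f 0 0 (i + 2) j) := by
  rw [show j + 2 = (j + 1) + 1 from rfl, show i + 2 = (i + 1) + 1 from rfl]
  simp only [SSc_succ_left, SSc_succ_right]
  push_cast
  linear_combination (-2 * SSc f 0 0 i j) * Complex.I_sq

noncomputable def gamF (f : ℕ → ℝ) (i j : ℕ) : ℝ := (SSc f 0 0 i j).re

lemma gamF_eq (f : ℕ → ℝ) (i j : ℕ) : gamF f i j =
    ∑ a ∈ Finset.range (i+1), ∑ b ∈ Finset.range (j+1),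
      (Nat.choose i a : ℝ) * (Nat.choose j b : ℝ) * HTn f 0 0 a b *
        (cosTn ((i-a) + (j-b)) * (-1 : ℝ) ^ (j-b)) := by
  rw [gamF, SSc, Complex.re_sum]
  refine Finset.sum_congr rfl fun a _ => ?_
  rw [Complex.re_sum]
  refine Finset.sum_congr rfl fun b _ => ?_
  rw [Complex.re_ofReal_mul, epsC_re]

lemma gamF_rec (f : ℕ → ℝ) (i j : ℕ) : gamF f (i+1) (j+1) =
    2 * gamF f i j + (1/2) * (gamF f i (j+2) + gamF f (i+2) j) := by
  rw [gamF, gamF, gamF, gamF, SSc_rec, Complex.add_re, Complex.re_ofReal_mul,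
    Complex.re_ofReal_mul, Complex.add_re]

lemma HTn_odd (f : ℕ → ℝ) {a b : ℕ} (h : ¬ (a + b) % 2 = 0) : HTn f 0 0 a b = 0 := by
  rw [HTn]
  refine Finset.sum_eq_zero fun a' ha' => Finset.sum_eq_zero fun b' hb' => ?_
  rw [Finset.mem_range] at ha' hb'
  by_cases h1 : (a' + b') % 2 = 0
  · rw [GTn_odd (by omega), mul_zero]
  · rw [FTn_odd f (by omega), mul_zero, zero_mul]

lemma gamF_odd (f : ℕ → ℝ) {i j : ℕ} (h : ¬ (i + j) % 2 = 0) : gamF f i j = 0 := by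
  rw [gamF_eq]
  refine Finset.sum_eq_zero fun a ha => Finset.sum_eq_zero fun b hb => ?_
  rw [Finset.mem_range] at ha hb
  by_cases h1 : (a + b) % 2 = 0
  · have h2 : ¬ ((i-a)+(j-b)) % 2 = 0 := by omega
    rw [cosTn_eq, if_neg h2, zero_mul, mul_zero]
  · rw [HTn_odd f h1, mul_zero, zero_mul]

lemma HTn_row (f : ℕ → ℝ) (a : ℕ) :
    HTn f 0 0 a 0 = a.factorial * PowerSeries.coeff a (evenPS f * cosPS⁻¹) := by
  rw [factCoeffMul, HTn]
  refine Finset.sum_congr rfl fun a' _ => ?_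
  rw [Finset.sum_range_one]
  simp only [Nat.choose_self, Nat.add_zero, Nat.sub_zero, Nat.sub_self, Nat.cast_one, FTn, GTn,
    Nat.choose_zero_right]
  ring

lemma HTn_col (f : ℕ → ℝ) (b : ℕ) :
    HTn f 0 0 0 b = b.factorial * PowerSeries.coeff b (evenPS f * cosPS⁻¹) := by
  rw [factCoeffMul, HTn, Finset.sum_range_one]
  refine Finset.sum_congr rfl fun b' _ => ?_
  simp only [Nat.choose_self, Nat.zero_add, Nat.add_zero, Nat.sub_zero, Nat.sub_self,
    Nat.cast_one, FTn, GTn, Nat.choose_zero_right]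
  ring

lemma seccos (f : ℕ → ℝ) : (evenPS f * cosPS⁻¹) * cosPS = evenPS f := by
  rw [mul_assoc, PowerSeries.inv_mul_cancel _ (by rw [constCoeff_cosPS]; exact one_ne_zero),
    mul_one]

lemma gamF_row (f : ℕ → ℝ) (i : ℕ) :
    gamF f i 0 = i.factorial * PowerSeries.coeff i (evenPS f) := by
  have h := factCoeffMul (evenPS f * cosPS⁻¹) cosPS i
  rw [seccos] at h
  rw [gamF_eq, h]
  refine Finset.sum_congr rfl fun a _ => ?_
  rw [Finset.sum_range_one, HTn_row, cosTn]
  simp only [Nat.choose_zero_right, Nat.cast_one, Nat.sub_zero, Nat.sub_self, Nat.add_zero,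
    pow_zero]
  ring

lemma cosTn_neg_pow (m : ℕ) : cosTn m * (-1 : ℝ) ^ m = cosTn m := by
  rw [cosTn_eq]
  by_cases h : m % 2 = 0
  · rw [if_pos h, (Nat.even_iff.mpr h).neg_one_pow, mul_one]
  · rw [if_neg h, zero_mul]

lemma gamF_col (f : ℕ → ℝ) (j : ℕ) :
    gamF f 0 j = j.factorial * PowerSeries.coeff j (evenPS f) := by
  have h := factCoeffMul (evenPS f * cosPS⁻¹) cosPS j
  rw [seccos] at h
  rw [gamF_eq, Finset.sum_range_one, h]
  refine Finset.sum_congr rfl fun b _ => ?_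
  rw [HTn_col]
  have : cosTn (0 - 0 + (j - b)) * (-1 : ℝ) ^ (j - b) = cosTn (j - b) := by
    rw [Nat.sub_self, Nat.zero_add, cosTn_neg_pow]
  rw [this, cosTn]
  simp only [Nat.choose_zero_right, Nat.cast_one, Nat.choose_self]
  ring

lemma gamF_00 (f : ℕ → ℝ) : gamF f 0 0 = 1 := by
  rw [gamF_row]
  simp [evenPS, PowerSeries.coeff_mk]

lemma gamF_row_val (f : ℕ → ℝ) (n : ℕ) (hn : 1 ≤ n) : gamF f (2 * n) 0 = f n := by
  rw [gamF_row, coeff_evenPS_two_mul f n hn]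
  field_simp

lemma gamF_col_val (f : ℕ → ℝ) (n : ℕ) (hn : 1 ≤ n) : gamF f 0 (2 * n) = f n := by
  rw [gamF_col, coeff_evenPS_two_mul f n hn]
  field_simp

noncomputable def fs2 (a b : ℕ) : Fin 2 →₀ ℕ := Finsupp.single 0 a + Finsupp.single 1 b

lemma fs2_apply0 (a b : ℕ) : fs2 a b 0 = a := by
  simp [fs2, Finsupp.single_apply]

lemma fs2_apply1 (a b : ℕ) : fs2 a b 1 = b := by
  simp [fs2, Finsupp.single_apply]

lemma fin2_ext {u v : Fin 2 →₀ ℕ} (h0 : u 0 = v 0) (h1 : u 1 = v 1) : u = v := by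
  ext x
  fin_cases x <;> assumption

lemma fs2_eq (u : Fin 2 →₀ ℕ) : fs2 (u 0) (u 1) = u := fin2_ext (by rw [fs2_apply0]) (by rw [fs2_apply1])

lemma sum_antidiagonal_fin2 (d : Fin 2 →₀ ℕ) (F : (Fin 2 →₀ ℕ) → (Fin 2 →₀ ℕ) → ℝ) :
    ∑ p ∈ Finset.HasAntidiagonal.antidiagonal d, F p.1 p.2 =
    ∑ a ∈ Finset.range (d 0 + 1), ∑ b ∈ Finset.range (d 1 + 1),
      F (fs2 a b) (fs2 (d 0 - a) (d 1 - b)) := by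
  rw [← Finset.sum_product']
  refine Finset.sum_nbij' (fun p => (p.1 0, p.1 1))
    (fun x => (fs2 x.1 x.2, fs2 (d 0 - x.1) (d 1 - x.2))) ?_ ?_ ?_ ?_ ?_
  · intro p hp
    rw [Finset.HasAntidiagonal.mem_antidiagonal] at hp
    have h0 : p.1 0 + p.2 0 = d 0 := by rw [← Finsupp.add_apply, hp]
    have h1 : p.1 1 + p.2 1 = d 1 := by rw [← Finsupp.add_apply, hp]
    simp only [Finset.mem_product, Finset.mem_range]
    omega
  · intro x hx
    simp only [Finset.mem_product, Finset.mem_range] at hx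
    rw [Finset.HasAntidiagonal.mem_antidiagonal]
    refine fin2_ext ?_ ?_
    · rw [Finsupp.add_apply, fs2_apply0, fs2_apply0]
      omega
    · rw [Finsupp.add_apply, fs2_apply1, fs2_apply1]
      omega
  · intro p hp
    rw [Finset.HasAntidiagonal.mem_antidiagonal] at hp
    have h0 : p.1 0 + p.2 0 = d 0 := by rw [← Finsupp.add_apply, hp]
    have h1 : p.1 1 + p.2 1 = d 1 := by rw [← Finsupp.add_apply, hp]
    have e2 : fs2 (d 0 - p.1 0) (d 1 - p.1 1) = p.2 := by
      refine fin2_ext ?_ ?_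
      · rw [fs2_apply0]; omega
      · rw [fs2_apply1]; omega
    simp only [fs2_eq, e2]
  · intro x hx
    simp only [Finset.mem_product, Finset.mem_range] at hx
    simp [fs2_apply0, fs2_apply1]
  · intro p hp
    rw [Finset.HasAntidiagonal.mem_antidiagonal] at hp
    have h0 : p.1 0 + p.2 0 = d 0 := by rw [← Finsupp.add_apply, hp]
    have h1 : p.1 1 + p.2 1 = d 1 := by rw [← Finsupp.add_apply, hp]
    have e2 : fs2 (d 0 - p.1 0) (d 1 - p.1 1) = p.2 := by
      refine fin2_ext ?_ ?_
      · rw [fs2_apply0]; omega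
      · rw [fs2_apply1]; omega
    rw [fs2_eq, e2]

lemma coeff_substXY (g : PowerSeries ℝ) (ε : ℝ) (a b : ℕ) :
    MvPowerSeries.coeff (fs2 a b) (substXY g ε) =
      PowerSeries.coeff (a + b) g * (Nat.choose (a + b) a : ℝ) * ε ^ b := by
  rw [MvPowerSeries.coeff_apply]
  show PowerSeries.coeff (fs2 a b 0 + fs2 a b 1) g * (Nat.choose (fs2 a b 0 + fs2 a b 1) (fs2 a b 0) : ℝ) * ε ^ (fs2 a b 1) = _
  rw [fs2_apply0, fs2_apply1]

lemma coeff_RHS (f : ℕ → ℝ) (d : Fin 2 →₀ ℕ) :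
    MvPowerSeries.coeff d (substXY (evenPS f) 1 * substXY cosPS⁻¹ 1 * substXY cosPS (-1)) =
    gamF f (d 0) (d 1) / (Nat.factorial (d 0) * Nat.factorial (d 1)) := by
  rw [eq_div_iff (by positivity)]
  rw [MvPowerSeries.coeff_mul]
  rw [show (∑ p ∈ Finset.HasAntidiagonal.antidiagonal d,
      MvPowerSeries.coeff p.1 (substXY (evenPS f) 1 * substXY cosPS⁻¹ 1) *
        MvPowerSeries.coeff p.2 (substXY cosPS (-1))) =
    ∑ a ∈ Finset.range (d 0 + 1), ∑ b ∈ Finset.range (d 1 + 1),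
      MvPowerSeries.coeff (fs2 a b) (substXY (evenPS f) 1 * substXY cosPS⁻¹ 1) *
        MvPowerSeries.coeff (fs2 (d 0 - a) (d 1 - b)) (substXY cosPS (-1))
    from sum_antidiagonal_fin2 d (fun x y => MvPowerSeries.coeff x
      (substXY (evenPS f) 1 * substXY cosPS⁻¹ 1) * MvPowerSeries.coeff y
      (substXY cosPS (-1)))]
  rw [gamF_eq, Finset.sum_mul]
  refine Finset.sum_congr rfl fun a ha => ?_
  rw [Finset.sum_mul]
  refine Finset.sum_congr rfl fun b hb => ?_
  rw [Finset.mem_range] at ha hb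
  rw [MvPowerSeries.coeff_mul]
  rw [show (∑ p ∈ Finset.HasAntidiagonal.antidiagonal (fs2 a b),
      MvPowerSeries.coeff p.1 (substXY (evenPS f) 1) *
        MvPowerSeries.coeff p.2 (substXY cosPS⁻¹ 1)) =
    ∑ a' ∈ Finset.range ((fs2 a b) 0 + 1), ∑ b' ∈ Finset.range ((fs2 a b) 1 + 1),
      MvPowerSeries.coeff (fs2 a' b') (substXY (evenPS f) 1) *
        MvPowerSeries.coeff (fs2 ((fs2 a b) 0 - a') ((fs2 a b) 1 - b')) (substXY cosPS⁻¹ 1)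
    from sum_antidiagonal_fin2 (fs2 a b) (fun x y => MvPowerSeries.coeff x
      (substXY (evenPS f) 1) * MvPowerSeries.coeff y (substXY cosPS⁻¹ 1))]
  simp only [fs2_apply0, fs2_apply1]
  rw [HTn]
  conv_lhs => rw [Finset.sum_mul, Finset.sum_mul]
  conv_rhs => rw [Finset.mul_sum, Finset.sum_mul]
  refine Finset.sum_congr rfl fun a' ha' => ?_
  conv_lhs => rw [Finset.sum_mul, Finset.sum_mul]
  conv_rhs => rw [Finset.mul_sum, Finset.sum_mul]
  refine Finset.sum_congr rfl fun b' hb' => ?_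
  rw [Finset.mem_range] at ha' hb'
  rw [coeff_substXY, coeff_substXY, coeff_substXY, FTn, GTn, cosTn]
  have h1 : (Nat.choose (d 0) a : ℝ) * a.factorial * (d 0 - a).factorial = (d 0).factorial := by
    have := Nat.choose_mul_factorial_mul_factorial (Nat.lt_succ_iff.mp (by omega : a < d 0 + 1))
    push_cast [← this]; ring
  have h2 : (Nat.choose (d 1) b : ℝ) * b.factorial * (d 1 - b).factorial = (d 1).factorial := by
    have := Nat.choose_mul_factorial_mul_factorial (Nat.lt_succ_iff.mp (by omega : b < d 1 + 1))
    push_cast [← this]; ring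
  have h3 : (Nat.choose a a' : ℝ) * a'.factorial * (a - a').factorial = a.factorial := by
    have := Nat.choose_mul_factorial_mul_factorial (by omega : a' ≤ a)
    push_cast [← this]; ring
  have h4 : (Nat.choose b b' : ℝ) * b'.factorial * (b - b').factorial = b.factorial := by
    have := Nat.choose_mul_factorial_mul_factorial (by omega : b' ≤ b)
    push_cast [← this]; ring
  have h5 : (Nat.choose (a' + b') a' : ℝ) * a'.factorial * b'.factorial = (a' + b').factorial := by
    have := Nat.choose_mul_factorial_mul_factorial (Nat.le_add_right a' b')
    rw [Nat.add_sub_cancel_left] at this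
    push_cast [← this]; ring
  have h6 : (Nat.choose ((a - a') + (b - b')) (a - a') : ℝ) * (a - a').factorial *
      (b - b').factorial = ((a - a') + (b - b')).factorial := by
    have := Nat.choose_mul_factorial_mul_factorial (Nat.le_add_right (a - a') (b - b'))
    rw [Nat.add_sub_cancel_left] at this
    push_cast [← this]; ring
  have h7 : (Nat.choose ((d 0 - a) + (d 1 - b)) (d 0 - a) : ℝ) * (d 0 - a).factorial *
      (d 1 - b).factorial = ((d 0 - a) + (d 1 - b)).factorial := by
    have := Nat.choose_mul_factorial_mul_factorial (Nat.le_add_right (d 0 - a) (d 1 - b))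
    rw [Nat.add_sub_cancel_left] at this
    push_cast [← this]; ring
  simp only [Nat.add_zero, one_pow]
  rw [← h1, ← h2, ← h3, ← h4, ← h5, ← h6, ← h7]
  ring

/-- Proposition 4.1: under the stated conditions on the matrix `Γ`,
`Σ_{i,j} γ_{i,j} x^i y^j/(i! j!) = f(x+y)·sec(x+y)·cos(x−y)` as formal power series,
where `sec = cosPS⁻¹` is the formal inverse of the cosine series. -/
theorem stmt18 (f : ℕ → ℝ) (γ : ℕ → ℕ → ℝ)
    (hconv : ∃ r : ℝ, 0 < r ∧
      Summable (fun n : ℕ => |f n| * r ^ (2 * n) / Nat.factorial (2 * n)))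
    (hrec : ∀ i j, 1 ≤ i → 1 ≤ j →
      γ i j = 2 * γ (i - 1) (j - 1) + (1 / 2) * (γ (i - 1) (j + 1) + γ (i + 1) (j - 1)))
    (hodd : ∀ i j, Odd (i + j) → γ i j = 0)
    (h00 : γ 0 0 = 1)
    (hzero : ∀ n : ℕ, γ (2 * n + 1) 0 = 0 ∧ γ 0 (2 * n + 1) = 0)
    (hval : ∀ n, 1 ≤ n → γ (2 * n) 0 = f n ∧ γ 0 (2 * n) = f n) :
    ∀ d : Fin 2 →₀ ℕ,
      γ (d 0) (d 1) / (Nat.factorial (d 0) * Nat.factorial (d 1)) =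
        MvPowerSeries.coeff d
          (substXY (evenPS f) 1 * substXY cosPS⁻¹ 1 * substXY cosPS (-1)) := by
  have key : ∀ s : ℕ, ∀ i j, i + j = s → γ i j = gamF f i j := by
    intro s
    induction s using Nat.strong_induction_on with
    | _ s IH =>
      intro i j hij
      by_cases hpar : s % 2 = 0
      case neg =>
        rw [hodd i j (by rw [hij]; exact Nat.odd_iff.mpr (by omega)),
          gamF_odd f (by omega)]
      case pos =>
      rcases Nat.eq_zero_or_pos s with hs0 | hspos
      · have hi : i = 0 := by omega
        have hj : j = 0 := by omega
        rw [hi, hj, h00, gamF_00]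
      · have hn1 : 1 ≤ s / 2 := by omega
        have hs2 : s = 2 * (s / 2) := by omega
        set A : ℕ → ℝ := fun i => γ i (s - i) - gamF f i (s - i) with hA
        have hA0 : A 0 = 0 := by
          have h1 : γ 0 (2 * (s / 2)) = f (s / 2) := (hval (s / 2) hn1).2
          have h2 : gamF f 0 (2 * (s / 2)) = f (s / 2) := gamF_col_val f (s / 2) hn1
          simp only [hA, Nat.sub_zero]
          rw [hs2, h1, h2, sub_self]
        have hAs : A s = 0 := by
          have h1 : γ (2 * (s / 2)) 0 = f (s / 2) := (hval (s / 2) hn1).1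
          have h2 : gamF f (2 * (s / 2)) 0 = f (s / 2) := gamF_row_val f (s / 2) hn1
          simp only [hA, Nat.sub_self]
          rw [hs2, h1, h2, sub_self]
        have hstep : ∀ i, i + 2 ≤ s → A (i + 2) = 2 * A (i + 1) - A i := by
          intro i his
          have e := hrec (i + 1) (s - i - 1) (by omega) (by omega)
          rw [show i + 1 - 1 = i by omega, show s - i - 1 - 1 = s - i - 2 by omega,
            show s - i - 1 + 1 = s - i by omega, show i + 1 + 1 = i + 2 by omega] at e
          have g := gamF_rec f i (s - i - 2)
          rw [show s - i - 2 + 1 = s - i - 1 by omega, show s - i - 2 + 2 = s - i by omega] at g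
          have hIH : γ i (s - i - 2) = gamF f i (s - i - 2) :=
            IH (s - 2) (by omega) i (s - i - 2) (by omega)
          simp only [hA]
          rw [show s - (i + 2) = s - i - 2 by omega, show s - (i + 1) = s - i - 1 by omega]
          linarith [e, g, hIH]
        have hlin : ∀ i, i ≤ s → A i = i * A 1 := by
          intro i
          induction i using Nat.strong_induction_on with
          | _ i IH2 =>
            intro his
            rcases i with _ | _ | i
            · simpa using hA0
            · simp
            · rw [hstep i (by omega), IH2 (i + 1) (by omega) (by omega),
                IH2 i (by omega) (by omega)]
              push_cast; ring
        have hA1 : A 1 = 0 := by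
          have h1 := hlin s le_rfl
          rw [hAs] at h1
          have hs0' : (s : ℝ) ≠ 0 := Nat.cast_ne_zero.mpr (by omega)
          rcases mul_eq_zero.mp h1.symm with h | h
          · exact absurd h hs0'
          · exact h
        have hAi : A i = 0 := by
          rw [hlin i (by omega), hA1, mul_zero]
        have := hAi
        simp only [hA] at this
        rw [show s - i = j by omega] at this
        linarith [this]
  intro d
  rw [coeff_RHS f d, key (d 0 + d 1) (d 0) (d 1) rfl]
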